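/- Let (x1, x2, z1) be a point satisfying the first-order conditions (1 − σ)·(p(x1 + x2) + x1·p′(x1 + x2)) = C′(x1) and q·F′(x1·p(x1 + x2) − z1) = (1 − q)·σ, with C′(x1) > 0, p(x1 + x2) > 0 and F″(x1·p(x1 + x2) − z1) > 0. Assume the inequality (In2): P_{x1x1}·P_{z1z1} − (P_{x1z1})² > |P_{x1x2}·P_{z1z1} − P_{x1z1}·P_{x2z1}|, the inequality −(2·p′(x1 + x2) + x1·p″(x1 + x2) − C″(x1)/(1 − σ)) > |p′(x1 + x2) + x1·p″(x1 + x2)|, and p(x1 + x2) + 2·x1·p′(x1 + x2) ≥ 0. Then the inequality (In3): −P_{x1x1} ≥ |P_{x1x2}| holds at this point, where subscripts on P denote iterated partial derivatives. -/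

import Mathlib

/-- The profit function
`P(x1, x2, z1) = (1 - qσ) x1 p(x1+x2) - C(x1) - (1-q)σ z1 - q F(x1 p(x1+x2) - z1)`. -/
noncomputable def P (σ q : ℝ) (p C F : ℝ → ℝ) (x1 x2 z1 : ℝ) : ℝ :=
  (1 - q * σ) * x1 * p (x1 + x2) - C x1 - (1 - q) * σ * z1
    - q * F (x1 * p (x1 + x2) - z1)

/-- `∂²P/∂x1²` at `(x1, x2, z1)`. -/
noncomputable def Px1x1 (σ q : ℝ) (p C F : ℝ → ℝ) (x1 x2 z1 : ℝ) : ℝ :=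
  deriv (deriv (fun v => P σ q p C F v x2 z1)) x1

/-- `∂²P/∂z1²` at `(x1, x2, z1)`. -/
noncomputable def Pz1z1 (σ q : ℝ) (p C F : ℝ → ℝ) (x1 x2 z1 : ℝ) : ℝ :=
  deriv (deriv (fun w => P σ q p C F x1 x2 w)) z1

/-- `∂²P/∂x1∂z1` at `(x1, x2, z1)` (first differentiate in `x1`, then in `z1`). -/
noncomputable def Px1z1 (σ q : ℝ) (p C F : ℝ → ℝ) (x1 x2 z1 : ℝ) : ℝ :=
  deriv (fun w => deriv (fun v => P σ q p C F v x2 w) x1) z1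

/-- `∂²P/∂x1∂x2` at `(x1, x2, z1)` (first differentiate in `x1`, then in `x2`). -/
noncomputable def Px1x2 (σ q : ℝ) (p C F : ℝ → ℝ) (x1 x2 z1 : ℝ) : ℝ :=
  deriv (fun u => deriv (fun v => P σ q p C F v u z1) x1) x2

/-- `∂²P/∂x2∂z1` at `(x1, x2, z1)` (first differentiate in `x2`, then in `z1`). -/
noncomputable def Px2z1 (σ q : ℝ) (p C F : ℝ → ℝ) (x1 x2 z1 : ℝ) : ℝ :=
  deriv (fun w => deriv (fun u => P σ q p C F x1 u w) x2) z1

lemma aux_slice1 (σ q : ℝ) (p C F : ℝ → ℝ) (hp : ContDiff ℝ 2 p) (hC : ContDiff ℝ 2 C)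
    (hF : ContDiff ℝ 2 F) (x2 z1 v : ℝ) :
    HasDerivAt (fun t => P σ q p C F t x2 z1)
      ((1 - q * σ) * (p (v + x2) + v * deriv p (v + x2)) - deriv C v
        - q * (deriv F (v * p (v + x2) - z1) * (p (v + x2) + v * deriv p (v + x2)))) v := by
  have hdp : Differentiable ℝ p := hp.differentiable two_ne_zero
  have hdF : Differentiable ℝ F := hF.differentiable two_ne_zero
  have hdC : Differentiable ℝ C := hC.differentiable two_ne_zero
  have h1 : HasDerivAt (fun t : ℝ => t + x2) 1 v := (hasDerivAt_id v).add_const x2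
  have h2 : HasDerivAt (fun t => p (t + x2)) (deriv p (v + x2)) v := by
    simpa [Function.comp_def] using HasDerivAt.comp v ((hdp (v + x2)).hasDerivAt) h1
  have h3 : HasDerivAt (fun t => t * p (t + x2)) (p (v + x2) + v * deriv p (v + x2)) v := by
    simpa [Pi.mul_def] using (hasDerivAt_id v).mul h2
  have h4 : HasDerivAt (fun t => F (t * p (t + x2) - z1))
      (deriv F (v * p (v + x2) - z1) * (p (v + x2) + v * deriv p (v + x2))) v := by
    simpa [Function.comp_def] using HasDerivAt.comp v ((hdF (v * p (v + x2) - z1)).hasDerivAt) (h3.sub_const z1)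
  have h5 := (((h3.const_mul (1 - q * σ)).sub (hdC v).hasDerivAt).sub_const
      ((1 - q) * σ * z1)).sub (h4.const_mul q)
  have hfun : (fun t => P σ q p C F t x2 z1)
      = fun t => (1 - q * σ) * (t * p (t + x2)) - C t - (1 - q) * σ * z1
        - q * F (t * p (t + x2) - z1) := by
    funext t; simp only [P]; ring
  rw [hfun]
  convert h5 using 1
  all_goals rfl

lemma aux_px1x1 (σ q : ℝ) (p C F : ℝ → ℝ) (hp : ContDiff ℝ 2 p) (hC : ContDiff ℝ 2 C)
    (hF : ContDiff ℝ 2 F) (x1 x2 z1 : ℝ) :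
    Px1x1 σ q p C F x1 x2 z1 =
      (1 - q * σ) * (2 * deriv p (x1 + x2) + x1 * deriv (deriv p) (x1 + x2))
        - deriv (deriv C) x1
        - q * (deriv (deriv F) (x1 * p (x1 + x2) - z1)
              * (p (x1 + x2) + x1 * deriv p (x1 + x2)) ^ 2
            + deriv F (x1 * p (x1 + x2) - z1)
              * (2 * deriv p (x1 + x2) + x1 * deriv (deriv p) (x1 + x2))) := by
  have hdp : Differentiable ℝ p := hp.differentiable two_ne_zero
  have hp1 : ContDiff ℝ 1 (deriv p) := by
    have h : ContDiff ℝ (1 + 1 : ℕ) p := by exact_mod_cast hp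
    exact (contDiff_succ_iff_deriv.mp (by exact_mod_cast h)).2.2
  have hC1 : ContDiff ℝ 1 (deriv C) := by
    have h : ContDiff ℝ (1 + 1 : ℕ) C := by exact_mod_cast hC
    exact (contDiff_succ_iff_deriv.mp (by exact_mod_cast h)).2.2
  have hF1 : ContDiff ℝ 1 (deriv F) := by
    have h : ContDiff ℝ (1 + 1 : ℕ) F := by exact_mod_cast hF
    exact (contDiff_succ_iff_deriv.mp (by exact_mod_cast h)).2.2
  have hdp1 : Differentiable ℝ (deriv p) := hp1.differentiable one_ne_zero
  have hdC1 : Differentiable ℝ (deriv C) := hC1.differentiable one_ne_zero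
  have hdF1 : Differentiable ℝ (deriv F) := hF1.differentiable one_ne_zero
  have hfun : deriv (fun v => P σ q p C F v x2 z1)
      = fun t => (1 - q * σ) * (p (t + x2) + t * deriv p (t + x2)) - deriv C t
        - q * (deriv F (t * p (t + x2) - z1) * (p (t + x2) + t * deriv p (t + x2))) := by
    funext t
    exact (aux_slice1 σ q p C F hp hC hF x2 z1 t).deriv
  have h1 : HasDerivAt (fun t : ℝ => t + x2) 1 x1 := (hasDerivAt_id x1).add_const x2
  have h2 : HasDerivAt (fun t => p (t + x2)) (deriv p (x1 + x2)) x1 := by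
    simpa [Function.comp_def] using HasDerivAt.comp x1 ((hdp (x1 + x2)).hasDerivAt) h1
  have h2' : HasDerivAt (fun t => deriv p (t + x2)) (deriv (deriv p) (x1 + x2)) x1 := by
    simpa [Function.comp_def] using HasDerivAt.comp x1 ((hdp1 (x1 + x2)).hasDerivAt) h1
  have h3 : HasDerivAt (fun t => t * p (t + x2))
      (p (x1 + x2) + x1 * deriv p (x1 + x2)) x1 := by
    simpa [Pi.mul_def] using (hasDerivAt_id x1).mul h2
  have h6 : HasDerivAt (fun t => t * deriv p (t + x2))
      (deriv p (x1 + x2) + x1 * deriv (deriv p) (x1 + x2)) x1 := by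
    simpa [Pi.mul_def] using (hasDerivAt_id x1).mul h2'
  have hA : HasDerivAt (fun t => p (t + x2) + t * deriv p (t + x2))
      (deriv p (x1 + x2) + (deriv p (x1 + x2) + x1 * deriv (deriv p) (x1 + x2))) x1 :=
    h2.add h6
  have hFc : HasDerivAt (fun t => deriv F (t * p (t + x2) - z1))
      (deriv (deriv F) (x1 * p (x1 + x2) - z1)
        * (p (x1 + x2) + x1 * deriv p (x1 + x2))) x1 := by
    simpa [Function.comp_def] using HasDerivAt.comp x1 ((hdF1 (x1 * p (x1 + x2) - z1)).hasDerivAt)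
      (h3.sub_const z1)
  have htot := ((hA.const_mul (1 - q * σ)).sub (hdC1 x1).hasDerivAt).sub
      ((hFc.mul hA).const_mul q)
  rw [Px1x1, hfun]
  erw [htot.deriv]
  ring

lemma aux_px1x2 (σ q : ℝ) (p C F : ℝ → ℝ) (hp : ContDiff ℝ 2 p) (hC : ContDiff ℝ 2 C)
    (hF : ContDiff ℝ 2 F) (x1 x2 z1 : ℝ) :
    Px1x2 σ q p C F x1 x2 z1 =
      (1 - q * σ) * (deriv p (x1 + x2) + x1 * deriv (deriv p) (x1 + x2))
        - q * (deriv (deriv F) (x1 * p (x1 + x2) - z1) * (x1 * deriv p (x1 + x2))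
              * (p (x1 + x2) + x1 * deriv p (x1 + x2))
            + deriv F (x1 * p (x1 + x2) - z1)
              * (deriv p (x1 + x2) + x1 * deriv (deriv p) (x1 + x2))) := by
  have hdp : Differentiable ℝ p := hp.differentiable two_ne_zero
  have hp1 : ContDiff ℝ 1 (deriv p) := by
    have h : ContDiff ℝ (1 + 1 : ℕ) p := by exact_mod_cast hp
    exact (contDiff_succ_iff_deriv.mp (by exact_mod_cast h)).2.2
  have hF1 : ContDiff ℝ 1 (deriv F) := by
    have h : ContDiff ℝ (1 + 1 : ℕ) F := by exact_mod_cast hF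
    exact (contDiff_succ_iff_deriv.mp (by exact_mod_cast h)).2.2
  have hdp1 : Differentiable ℝ (deriv p) := hp1.differentiable one_ne_zero
  have hdF1 : Differentiable ℝ (deriv F) := hF1.differentiable one_ne_zero
  have hfun : (fun u => deriv (fun v => P σ q p C F v u z1) x1)
      = fun u => (1 - q * σ) * (p (x1 + u) + x1 * deriv p (x1 + u)) - deriv C x1
        - q * (deriv F (x1 * p (x1 + u) - z1) * (p (x1 + u) + x1 * deriv p (x1 + u))) := by
    funext u
    exact (aux_slice1 σ q p C F hp hC hF u z1 x1).deriv
  have k1 : HasDerivAt (fun u : ℝ => x1 + u) 1 x2 := by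
    simpa [Pi.mul_def] using (hasDerivAt_id x2).const_add x1
  have k2 : HasDerivAt (fun u => p (x1 + u)) (deriv p (x1 + x2)) x2 := by
    simpa [Function.comp_def] using HasDerivAt.comp x2 ((hdp (x1 + x2)).hasDerivAt) k1
  have k2' : HasDerivAt (fun u => deriv p (x1 + u)) (deriv (deriv p) (x1 + x2)) x2 := by
    simpa [Function.comp_def] using HasDerivAt.comp x2 ((hdp1 (x1 + x2)).hasDerivAt) k1
  have kA : HasDerivAt (fun u => p (x1 + u) + x1 * deriv p (x1 + u))
      (deriv p (x1 + x2) + x1 * deriv (deriv p) (x1 + x2)) x2 :=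
    k2.add (k2'.const_mul x1)
  have kR : HasDerivAt (fun u => x1 * p (x1 + u)) (x1 * deriv p (x1 + x2)) x2 :=
    k2.const_mul x1
  have kF : HasDerivAt (fun u => deriv F (x1 * p (x1 + u) - z1))
      (deriv (deriv F) (x1 * p (x1 + x2) - z1) * (x1 * deriv p (x1 + x2))) x2 := by
    simpa [Function.comp_def] using HasDerivAt.comp x2 ((hdF1 (x1 * p (x1 + x2) - z1)).hasDerivAt)
      (kR.sub_const z1)
  have ktot := (((kA.const_mul (1 - q * σ)).sub_const (deriv C x1)).sub
      ((kF.mul kA).const_mul q))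
  rw [Px1x2, hfun]
  erw [ktot.deriv]

theorem stmt_4 (σ q : ℝ) (hσ0 : 0 < σ) (hσ1 : σ < 1) (hq0 : 0 < q) (hq1 : q < 1)
    (p C F : ℝ → ℝ) (hp : ContDiff ℝ 2 p) (hC : ContDiff ℝ 2 C) (hF : ContDiff ℝ 2 F)
    (x1 x2 z1 : ℝ)
    (hfoc1 : (1 - σ) * (p (x1 + x2) + x1 * deriv p (x1 + x2)) = deriv C x1)
    (hfoc2 : q * deriv F (x1 * p (x1 + x2) - z1) = (1 - q) * σ)
    (hC' : 0 < deriv C x1)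
    (hppos : 0 < p (x1 + x2))
    (hF2 : 0 < deriv (deriv F) (x1 * p (x1 + x2) - z1))
    (hIn2 : Px1x1 σ q p C F x1 x2 z1 * Pz1z1 σ q p C F x1 x2 z1
        - (Px1z1 σ q p C F x1 x2 z1) ^ 2
      > |Px1x2 σ q p C F x1 x2 z1 * Pz1z1 σ q p C F x1 x2 z1
          - Px1z1 σ q p C F x1 x2 z1 * Px2z1 σ q p C F x1 x2 z1|)
    (hineq : -(2 * deriv p (x1 + x2) + x1 * deriv (deriv p) (x1 + x2)
          - deriv (deriv C) x1 / (1 - σ))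
        > |deriv p (x1 + x2) + x1 * deriv (deriv p) (x1 + x2)|)
    (hsum : 0 ≤ p (x1 + x2) + 2 * x1 * deriv p (x1 + x2)) :
    -Px1x1 σ q p C F x1 x2 z1 ≥ |Px1x2 σ q p C F x1 x2 z1| := by
  have e1 : Px1x1 σ q p C F x1 x2 z1 =
      (1 - σ) * (2 * deriv p (x1 + x2) + x1 * deriv (deriv p) (x1 + x2))
        - deriv (deriv C) x1
        - q * deriv (deriv F) (x1 * p (x1 + x2) - z1)
          * (p (x1 + x2) + x1 * deriv p (x1 + x2)) ^ 2 := by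
    rw [aux_px1x1 σ q p C F hp hC hF x1 x2 z1]
    linear_combination (-(2 * deriv p (x1 + x2) + x1 * deriv (deriv p) (x1 + x2))) * hfoc2
  have e2 : Px1x2 σ q p C F x1 x2 z1 =
      (1 - σ) * (deriv p (x1 + x2) + x1 * deriv (deriv p) (x1 + x2))
        - q * deriv (deriv F) (x1 * p (x1 + x2) - z1)
          * (x1 * deriv p (x1 + x2))
          * (p (x1 + x2) + x1 * deriv p (x1 + x2)) := by
    rw [aux_px1x2 σ q p C F hp hC hF x1 x2 z1]
    linear_combination (-(deriv p (x1 + x2) + x1 * deriv (deriv p) (x1 + x2))) * hfoc2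
  rw [ge_iff_le, e1, e2, abs_le]
  clear e1 e2 hIn2 hfoc1 hfoc2 hC' hp hC hF
  set p0 := p (x1 + x2) with hp0
  set p1 := deriv p (x1 + x2) with hp1d
  set p2 := deriv (deriv p) (x1 + x2) with hp2d
  set C2 := deriv (deriv C) x1 with hC2d
  set F2 := deriv (deriv F) (x1 * p (x1 + x2) - z1) with hF2dd
  have hspos : (0 : ℝ) < 1 - σ := by linarith
  have hKpos : 0 < q * F2 := mul_pos hq0 hF2
  have hsq : (x1 * p1) ^ 2 ≤ (p0 + x1 * p1) ^ 2 := by nlinarith [mul_nonneg hppos.le hsum]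
  have habs : |x1 * p1| ≤ |p0 + x1 * p1| := sq_le_sq.mp hsq
  have hAA : |x1 * p1| * |p0 + x1 * p1| ≤ (p0 + x1 * p1) ^ 2 := by
    calc |x1 * p1| * |p0 + x1 * p1| ≤ |p0 + x1 * p1| * |p0 + x1 * p1| :=
          mul_le_mul_of_nonneg_right habs (abs_nonneg _)
      _ = (p0 + x1 * p1) ^ 2 := by rw [abs_mul_abs_self]; ring
  have ht1 : (x1 * p1) * (p0 + x1 * p1) ≤ (p0 + x1 * p1) ^ 2 := by
    calc (x1 * p1) * (p0 + x1 * p1) ≤ |(x1 * p1) * (p0 + x1 * p1)| := le_abs_self _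
      _ = |x1 * p1| * |p0 + x1 * p1| := abs_mul _ _
      _ ≤ (p0 + x1 * p1) ^ 2 := hAA
  have ht2 : -((p0 + x1 * p1) ^ 2) ≤ (x1 * p1) * (p0 + x1 * p1) := by
    have h1 : -|(x1 * p1) * (p0 + x1 * p1)| ≤ (x1 * p1) * (p0 + x1 * p1) := neg_abs_le _
    have h2 : |(x1 * p1) * (p0 + x1 * p1)| ≤ (p0 + x1 * p1) ^ 2 := by
      rw [abs_mul]; exact hAA
    linarith
  have hineq' : (1 - σ) * |p1 + x1 * p2| < -((1 - σ) * (2 * p1 + x1 * p2)) + C2 := by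
    have h2 := mul_lt_mul_of_pos_left hineq hspos
    have h3 : (1 - σ) * (C2 / (1 - σ)) = C2 := mul_div_cancel₀ C2 (ne_of_gt hspos)
    nlinarith [h2, h3]
  constructor
  · nlinarith [mul_le_mul_of_nonneg_left ht1 hKpos.le,
      mul_le_mul_of_nonneg_left (neg_abs_le (p1 + x1 * p2)) hspos.le, hineq']
  · nlinarith [mul_le_mul_of_nonneg_left ht2 hKpos.le,
      mul_le_mul_of_nonneg_left (le_abs_self (p1 + x1 * p2)) hspos.le, hineq']
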